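/- Every solution x of the DEPCAG (e^{−t}·x′(t))′ + x(γ(t))·e^{t² + x(γ(t))²} = 0, t ≥ 0 (i.e., every continuously differentiable x : [0, ∞) → ℝ such that for every k and every t ∈ (t_k, t_{k+1}), the function s ↦ e^{−s}·x′(s) is differentiable at t with derivative −x(ζ_k)·e^{t² + x(ζ_k)²}), is oscillatory. -/

import Mathlib

open MeasureTheory Set Filter

/-- Glue antitonicity across a partition into intervals. -/
lemma stmt17_glue (t : ℕ → ℝ) (ht_mono : StrictMono t)
    (ht_top : Tendsto t atTop atTop)
    (g : ℝ → ℝ) (K : ℕ)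
    (hg : ∀ k, K ≤ k → AntitoneOn g (Icc (t k) (t (k+1)))) :
    AntitoneOn g (Ici (t K)) := by
  have step : ∀ k, K ≤ k → g (t (k+1)) ≤ g (t k) := fun k hk =>
    hg k hk ⟨le_refl _, (ht_mono k.lt_succ_self).le⟩
      ⟨(ht_mono k.lt_succ_self).le, le_refl _⟩ (ht_mono k.lt_succ_self).le
  have aux : ∀ n k, K ≤ k → g (t (k+n)) ≤ g (t k) := by
    intro n
    induction n with
    | zero => intro k hk; simp
    | succ n ih =>
      intro k hk
      have h1 : g (t (k + n + 1)) ≤ g (t (k + n)) :=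
        step (k+n) (le_trans hk (Nat.le_add_right _ _))
      have h2 := ih k hk
      calc g (t (k + (n+1))) = g (t (k + n + 1)) := by ring_nf
        _ ≤ g (t (k+n)) := h1
        _ ≤ g (t k) := h2
  have hfind : ∀ s, t K ≤ s → ∃ k, K ≤ k ∧ t k ≤ s ∧ s < t (k+1) := by
    intro s hs
    have hex : ∃ m, s < t m := (ht_top.eventually (eventually_gt_atTop s)).exists
    have hspec : s < t (Nat.find hex) := Nat.find_spec hex
    have hm₀ne : Nat.find hex ≠ 0 := by
      intro h
      have h0 : t 0 ≤ t K := ht_mono.monotone (Nat.zero_le K)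
      rw [h] at hspec; linarith
    set k := Nat.find hex - 1 with hkdef
    have hfk : Nat.find hex = k + 1 := by omega
    have hmin : ¬ s < t k := Nat.find_min hex (by omega)
    rw [hfk] at hspec
    refine ⟨k, ?_, not_lt.1 hmin, hspec⟩
    have h2 : t K < t (k+1) := lt_of_le_of_lt hs hspec
    have := ht_mono.lt_iff_lt.1 h2
    omega
  intro s₁ hs₁ s₂ hs₂ h12
  obtain ⟨k₁, hk₁K, hk₁l, hk₁r⟩ := hfind s₁ hs₁
  obtain ⟨k₂, hk₂K, hk₂l, hk₂r⟩ := hfind s₂ hs₂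
  have hk₁₂ : k₁ ≤ k₂ := by
    have h : t k₁ < t (k₂+1) := lt_of_le_of_lt (le_trans hk₁l h12) hk₂r
    have := ht_mono.lt_iff_lt.1 h
    omega
  rcases eq_or_lt_of_le hk₁₂ with heq | hlt
  · subst heq
    exact hg k₁ hk₁K ⟨hk₁l, le_trans h12 hk₂r.le⟩ ⟨le_trans hk₁l h12, hk₂r.le⟩ h12
  · have h1 : g s₂ ≤ g (t k₂) :=
      hg k₂ hk₂K ⟨le_refl _, (ht_mono k₂.lt_succ_self).le⟩ ⟨hk₂l, hk₂r.le⟩ hk₂l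
    have h2 : g (t k₂) ≤ g (t (k₁+1)) := by
      have := aux (k₂ - (k₁+1)) (k₁+1) (by omega)
      rwa [show k₁ + 1 + (k₂ - (k₁+1)) = k₂ by omega] at this
    have h3 : g (t (k₁+1)) ≤ g s₁ :=
      hg k₁ hk₁K ⟨hk₁l, hk₁r.le⟩ ⟨(ht_mono k₁.lt_succ_self).le, le_refl _⟩ hk₁r.le
    linarith

/-- Key lemma: any solution is ≤ 0 arbitrarily far out. -/
lemma stmt17_key
    (t ζ : ℕ → ℝ) (ht_mono : StrictMono t) (ht0 : t 0 = 0)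
    (ht_top : Tendsto t atTop atTop)
    (hζ : ∀ k : ℕ, ζ k ∈ Icc (t k) (t (k+1)))
    (x x' : ℝ → ℝ)
    (hx_deriv : ∀ s ∈ Ici (0 : ℝ), HasDerivAt x (x' s) s)
    (hx'_cont : ContinuousOn x' (Ici (0 : ℝ)))
    (hE : ∀ k : ℕ, ∀ s ∈ Ioo (t k) (t (k+1)),
      HasDerivAt (fun u => Real.exp (-u) * x' u)
        (-(x (ζ k) * Real.exp (s^2 + (x (ζ k))^2))) s) :
    ∀ T : ℝ, ∃ a, T ≤ a ∧ x a ≤ 0 := by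
  intro T
  by_contra hcon
  push_neg at hcon
  -- hcon : ∀ a, T ≤ a → 0 < x a
  set T₀ : ℝ := max T 0 with hT₀
  have hT₀0 : (0:ℝ) ≤ T₀ := le_max_right _ _
  have hT₀T : T ≤ T₀ := le_max_left _ _
  obtain ⟨K₀, hK₀⟩ : ∃ K₀, T₀ ≤ t K₀ := (ht_top.eventually (eventually_ge_atTop T₀)).exists
  set M : ℝ := t K₀ with hM
  have hM0 : (0:ℝ) ≤ M := le_trans hT₀0 hK₀
  have hMT : T ≤ M := le_trans hT₀T hK₀
  set y : ℝ → ℝ := fun s => Real.exp (-s) * x' s with hy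
  have hy_cont : ContinuousOn y (Ici (0:ℝ)) :=
    ((Real.continuous_exp.comp continuous_neg).continuousOn).mul hx'_cont
  have htk : ∀ k, K₀ ≤ k → M ≤ t k := fun k hk => ht_mono.monotone hk
  have hζk : ∀ k, K₀ ≤ k → M ≤ ζ k := fun k hk => le_trans (htk k hk) (hζ k).1
  have hxζ : ∀ k, K₀ ≤ k → 0 < x (ζ k) := fun k hk => hcon _ (le_trans hMT (hζk k hk))
  -- generic gluing: y + c·id is antitone on [M, ∞)
  have gen : ∀ c : ℝ,
      (∀ k, K₀ ≤ k → ∀ s ∈ Ioo (t k) (t (k+1)),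
        c ≤ x (ζ k) * Real.exp (s^2 + (x (ζ k))^2)) →
      AntitoneOn (fun s => y s + c * s) (Ici M) := by
    intro c hc
    apply stmt17_glue t ht_mono ht_top _ K₀
    intro k hk
    have hsub : Icc (t k) (t (k+1)) ⊆ Ici (0:ℝ) := fun s hs =>
      le_trans (le_trans hM0 (htk k hk)) hs.1
    apply antitoneOn_of_deriv_nonpos (convex_Icc _ _)
    · exact ((hy_cont.mono hsub).add (continuous_const.mul continuous_id).continuousOn)
    · intro s hs
      rw [interior_Icc] at hs
      have hds : HasDerivAt (fun u => y u + c * u)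
          (-(x (ζ k) * Real.exp (s^2 + (x (ζ k))^2)) + c) s := by
        have h1 := hE k s hs
        have h2 : HasDerivAt (fun u : ℝ => c * u) c s := by
          simpa using (hasDerivAt_id s).const_mul c
        exact h1.add h2
      exact hds.differentiableAt.differentiableWithinAt
    · intro s hs
      rw [interior_Icc] at hs
      have hds : HasDerivAt (fun u => y u + c * u)
          (-(x (ζ k) * Real.exp (s^2 + (x (ζ k))^2)) + c) s := by
        have h1 := hE k s hs
        have h2 : HasDerivAt (fun u : ℝ => c * u) c s := by
          simpa using (hasDerivAt_id s).const_mul c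
        exact h1.add h2
      rw [hds.deriv]
      have := hc k hk s hs
      linarith
  -- y is antitone on [M, ∞)
  have hyanti : AntitoneOn y (Ici M) := by
    have h0 := gen 0 (fun k hk s _ => le_of_lt (mul_pos (hxζ k hk) (Real.exp_pos _)))
    intro a ha b hb hab
    simpa using h0 ha hb hab
  -- there exists t₁ ≥ M with y t₁ < 0
  have hneg : ∃ t₁, M ≤ t₁ ∧ y t₁ < 0 := by
    by_contra h'
    push_neg at h'
    -- ∀ t₁ ≥ M, 0 ≤ y t₁, so x' ≥ 0 on [M,∞), so x is monotone there
    have hx'nn : ∀ s, M ≤ s → 0 ≤ x' s := by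
      intro s hs
      have h1 : 0 ≤ Real.exp (-s) * x' s := h' s hs
      have h2 := Real.exp_pos (-s)
      nlinarith [h1, h2]
    have hxmono : MonotoneOn x (Ici M) := by
      apply monotoneOn_of_deriv_nonneg (convex_Ici M)
      · intro s hs
        exact ((hx_deriv s (le_trans hM0 hs)).continuousAt).continuousWithinAt
      · intro s hs
        rw [interior_Ici] at hs
        exact (hx_deriv s (le_trans hM0 hs.le)).differentiableAt.differentiableWithinAt
      · intro s hs
        rw [interior_Ici] at hs
        rw [(hx_deriv s (le_trans hM0 hs.le)).deriv]
        exact hx'nn s hs.le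
    set c : ℝ := x M with hc
    have hcpos : 0 < c := hcon M hMT
    have hcond : ∀ k, K₀ ≤ k → ∀ s ∈ Ioo (t k) (t (k+1)),
        c ≤ x (ζ k) * Real.exp (s^2 + (x (ζ k))^2) := by
      intro k hk s _
      have h1 : c ≤ x (ζ k) := hxmono (self_mem_Ici) (hζk k hk) (hζk k hk)
      have h2 : (1:ℝ) ≤ Real.exp (s^2 + (x (ζ k))^2) := Real.one_le_exp (by positivity)
      nlinarith
    have ganti := gen c hcond
    set s₂ : ℝ := max M (M + y M / c) + 1 with hs₂
    have hs₂M : M ≤ s₂ := by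
      rw [hs₂]
      have := le_max_left M (M + y M / c)
      linarith
    have hkey : y s₂ + c * s₂ ≤ y M + c * M :=
      ganti self_mem_Ici hs₂M hs₂M
    have hys₂ : 0 ≤ y s₂ := h' s₂ hs₂M
    have h1 : M + y M / c + 1 ≤ s₂ := by
      rw [hs₂]
      have := le_max_right M (M + y M / c)
      linarith
    have h2 : c * (M + y M / c + 1) ≤ c * s₂ := mul_le_mul_of_nonneg_left h1 hcpos.le
    have h3 : c * (y M / c) = y M := mul_div_cancel₀ _ (ne_of_gt hcpos)
    have h4 : c * (M + y M / c + 1) = c * M + c * (y M / c) + c := by ring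
    rw [h3] at h4
    rw [h4] at h2
    linarith
  obtain ⟨t₁, ht₁M, ht₁neg⟩ := hneg
  set c : ℝ := -(Real.exp t₁ * y t₁) with hc
  have hcpos : 0 < c := by
    have := Real.exp_pos t₁
    have := ht₁neg
    rw [hc]; nlinarith
  have hx'le : ∀ s, t₁ ≤ s → x' s ≤ -c := by
    intro s hs
    have hsM : M ≤ s := le_trans ht₁M hs
    have hys : y s ≤ y t₁ := hyanti ht₁M hsM hs
    have hxy : x' s = Real.exp s * y s := by
      rw [hy]
      simp only []
      rw [← mul_assoc, ← Real.exp_add]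
      simp
    have hexp : Real.exp t₁ ≤ Real.exp s := Real.exp_le_exp.2 hs
    have h1 : Real.exp s * y s ≤ Real.exp s * y t₁ :=
      mul_le_mul_of_nonneg_left hys (Real.exp_pos s).le
    have h2 : Real.exp s * y t₁ ≤ Real.exp t₁ * y t₁ :=
      mul_le_mul_of_nonpos_right hexp ht₁neg.le
    rw [hxy, hc]
    linarith
  have hanti : AntitoneOn (fun s => x s + c * s) (Ici t₁) := by
    have ht₁0 : (0:ℝ) ≤ t₁ := le_trans hM0 ht₁M
    apply antitoneOn_of_deriv_nonpos (convex_Ici t₁)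
    · intro s hs
      exact (((hx_deriv s (le_trans ht₁0 hs)).continuousAt).continuousWithinAt).add
        ((continuous_const.mul continuous_id).continuousOn s hs)
    · intro s hs
      rw [interior_Ici] at hs
      have hds : HasDerivAt (fun u => x u + c * u) (x' s + c) s := by
        have h2 : HasDerivAt (fun u : ℝ => c * u) c s := by
          simpa using (hasDerivAt_id s).const_mul c
        exact (hx_deriv s (le_trans ht₁0 hs.le)).add h2
      exact hds.differentiableAt.differentiableWithinAt
    · intro s hs
      rw [interior_Ici] at hs
      have hds : HasDerivAt (fun u => x u + c * u) (x' s + c) s := by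
        have h2 : HasDerivAt (fun u : ℝ => c * u) c s := by
          simpa using (hasDerivAt_id s).const_mul c
        exact (hx_deriv s (le_trans ht₁0 hs.le)).add h2
      rw [hds.deriv]
      have := hx'le s hs.le
      linarith
  set s₃ : ℝ := max t₁ (t₁ + x t₁ / c) + 1 with hs₃
  have hs₃t₁ : t₁ ≤ s₃ := by
    rw [hs₃]
    have := le_max_left t₁ (t₁ + x t₁ / c)
    linarith
  have hkey : x s₃ + c * s₃ ≤ x t₁ + c * t₁ := hanti self_mem_Ici hs₃t₁ hs₃t₁
  have hpos : 0 < x s₃ := hcon s₃ (le_trans hMT (le_trans ht₁M hs₃t₁))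
  have h1 : t₁ + x t₁ / c + 1 ≤ s₃ := by
    rw [hs₃]
    have := le_max_right t₁ (t₁ + x t₁ / c)
    linarith
  have h2 : c * (t₁ + x t₁ / c + 1) ≤ c * s₃ := mul_le_mul_of_nonneg_left h1 hcpos.le
  have h3 : c * (x t₁ / c) = x t₁ := mul_div_cancel₀ _ (ne_of_gt hcpos)
  have h4 : c * (t₁ + x t₁ / c + 1) = c * t₁ + c * (x t₁ / c) + c := by ring
  rw [h3] at h4
  rw [h4] at h2
  linarith

theorem stmt17
    (t ζ : ℕ → ℝ) (ht_mono : StrictMono t) (ht0 : t 0 = 0)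
    (ht_top : Tendsto t atTop atTop)
    (hζ : ∀ k : ℕ, ζ k ∈ Icc (t k) (t (k+1)))
    (x x' : ℝ → ℝ)
    (hx_deriv : ∀ s ∈ Ici (0 : ℝ), HasDerivAt x (x' s) s)
    (hx'_cont : ContinuousOn x' (Ici (0 : ℝ)))
    (hE : ∀ k : ℕ, ∀ s ∈ Ioo (t k) (t (k+1)),
      HasDerivAt (fun u => Real.exp (-u) * x' u)
        (-(x (ζ k) * Real.exp (s^2 + (x (ζ k))^2))) s) :
    ∃ a b : ℕ → ℝ, Tendsto a atTop atTop ∧ Tendsto b atTop atTop ∧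
      ∀ n : ℕ, x (a n) ≤ 0 ∧ 0 ≤ x (b n) := by
  have hA := stmt17_key t ζ ht_mono ht0 ht_top hζ x x' hx_deriv hx'_cont hE
  have hE' : ∀ k : ℕ, ∀ s ∈ Ioo (t k) (t (k+1)),
      HasDerivAt (fun u => Real.exp (-u) * (-x' u))
        (-((-x (ζ k)) * Real.exp (s^2 + (-x (ζ k))^2))) s := by
    intro k s hs
    have := (hE k s hs).neg
    simpa [Pi.neg_def, mul_neg, neg_neg, neg_sq] using this
  have hB := stmt17_key t ζ ht_mono ht0 ht_top hζ (fun u => -x u) (fun u => -x' u)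
    (fun s hs => (hx_deriv s hs).neg) hx'_cont.neg hE'
  choose a ha hxa using fun n : ℕ => hA (n : ℝ)
  choose b hb hxb using fun n : ℕ => hB (n : ℝ)
  refine ⟨a, b, ?_, ?_, fun n => ⟨hxa n, ?_⟩⟩
  · exact tendsto_atTop_mono ha tendsto_natCast_atTop_atTop
  · exact tendsto_atTop_mono hb tendsto_natCast_atTop_atTop
  · have := hxb n
    simpa using neg_nonpos.1 this
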